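/- Let $(X_n)$, $(Y_n)$ be sequences of real random variables and $R > 0$, and suppose $a_n(X_n - x_0) \to N(0, \sigma_X^2)$ in distribution and $b_n(Y_n - y_0) \to N(0, \sigma_Y^2)$ in distribution with $X_n, Y_n$ independent for each $n$, $x_0, y_0 > 0$, $a_n, b_n \to \infty$, and $b_n/a_n \to 0$. Then $b_n\left(\frac{X_n}{Y_n} - \frac{x_0}{y_0}\right) \to N\left(0, \frac{x_0^2}{y_0^2}\cdot\frac{\sigma_Y^2}{y_0^2}\right)$ in distribution. -/

import Mathlib

open MeasureTheory ProbabilityTheory Filter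

/-- Convergence in distribution of a sequence of real random variables to a limit law,
phrased via integrals of bounded continuous test functions. -/
def ConvInDist {Ω : Type*} [MeasurableSpace Ω] (μ : Measure Ω) (X : ℕ → Ω → ℝ)
    (ν : Measure ℝ) : Prop :=
  ∀ f : BoundedContinuousFunction ℝ ℝ,
    Tendsto (fun n => ∫ ω, f (X n ω) ∂μ) atTop (nhds (∫ x, f x ∂ν))

section Aux

/-- A continuous bump: `0` for `|x| ≤ M`, `1` for `|x| ≥ M + 1`. -/
noncomputable def bumpBCF (M : ℝ) : BoundedContinuousFunction ℝ ℝ :=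
  BoundedContinuousFunction.mkOfBound
    ⟨fun x => min 1 (max (|x| - M) 0),
      continuous_const.min (((continuous_abs).sub continuous_const).max continuous_const)⟩
    1 (by
      intro x y
      have h1 : (0:ℝ) ≤ min 1 (max (|x| - M) 0) := le_min zero_le_one (le_max_right _ _)
      have h2 : min 1 (max (|x| - M) 0) ≤ 1 := min_le_left _ _
      have h3 : (0:ℝ) ≤ min 1 (max (|y| - M) 0) := le_min zero_le_one (le_max_right _ _)
      have h4 : min 1 (max (|y| - M) 0) ≤ 1 := min_le_left _ _
      simp only [ContinuousMap.coe_mk, Real.dist_eq]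
      rw [abs_le]
      constructor <;> linarith)

lemma bumpBCF_apply (M x : ℝ) : bumpBCF M x = min 1 (max (|x| - M) 0) := rfl

lemma bumpBCF_nonneg (M x : ℝ) : 0 ≤ bumpBCF M x :=
  le_min zero_le_one (le_max_right _ _)

lemma bumpBCF_le_one (M x : ℝ) : bumpBCF M x ≤ 1 := min_le_left _ _

lemma bumpBCF_eq_one {M x : ℝ} (h : M + 1 ≤ |x|) : bumpBCF M x = 1 := by
  rw [bumpBCF_apply]
  have : (1:ℝ) ≤ max (|x| - M) 0 := le_max_of_le_left (by linarith)
  exact min_eq_left this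

lemma bumpBCF_eq_zero {M x : ℝ} (h : |x| ≤ M) : bumpBCF M x = 0 := by
  rw [bumpBCF_apply]
  have : max (|x| - M) 0 = 0 := max_eq_right (by linarith)
  rw [this]
  exact min_eq_right zero_le_one

variable {Ω : Type*} [MeasurableSpace Ω] {μ : Measure Ω} [IsProbabilityMeasure μ]

lemma toReal_meas_le_integral_bump {W : Ω → ℝ} (hW : Measurable W) (M : ℝ) :
    (μ {ω | M + 1 ≤ |W ω|}).toReal ≤ ∫ ω, bumpBCF M (W ω) ∂μ := by
  have hset : MeasurableSet {ω | M + 1 ≤ |W ω|} :=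
    measurableSet_le measurable_const hW.abs
  have hint : Integrable (fun ω => bumpBCF M (W ω)) μ := by
    refine Integrable.mono' (integrable_const 1)
      (((bumpBCF M).continuous.measurable.comp hW).aestronglyMeasurable)
      (ae_of_all _ fun ω => ?_)
    rw [Real.norm_eq_abs, abs_of_nonneg (bumpBCF_nonneg _ _)]
    exact bumpBCF_le_one _ _
  have hind : Integrable (Set.indicator {ω | M + 1 ≤ |W ω|} (fun _ => (1:ℝ))) μ :=
    (integrable_const 1).indicator hset
  calc (μ {ω | M + 1 ≤ |W ω|}).toReal
      = ∫ ω, Set.indicator {ω | M + 1 ≤ |W ω|} (fun _ => (1:ℝ)) ω ∂μ := by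
        rw [integral_indicator_const _ hset, smul_eq_mul, mul_one]
        rfl
    _ ≤ ∫ ω, bumpBCF M (W ω) ∂μ := by
        refine integral_mono hind hint fun ω => ?_
        by_cases hω : ω ∈ {ω | M + 1 ≤ |W ω|}
        · rw [Set.indicator_of_mem hω]
          rw [bumpBCF_eq_one hω]
        · rw [Set.indicator_of_notMem hω]
          exact bumpBCF_nonneg _ _

lemma integral_bump_le {ν : Measure ℝ} [IsProbabilityMeasure ν] (M : ℝ) :
    ∫ x, bumpBCF M x ∂ν ≤ (ν {x : ℝ | M ≤ |x|}).toReal := by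
  have hset : MeasurableSet {x : ℝ | M ≤ |x|} :=
    measurableSet_le measurable_const measurable_abs
  have hint : Integrable (fun x => bumpBCF M x) ν := (bumpBCF M).integrable ν
  have hind : Integrable (Set.indicator {x : ℝ | M ≤ |x|} (fun _ => (1:ℝ))) ν :=
    (integrable_const 1).indicator hset
  calc ∫ x, bumpBCF M x ∂ν
      ≤ ∫ x, Set.indicator {x : ℝ | M ≤ |x|} (fun _ => (1:ℝ)) x ∂ν := by
        refine integral_mono hint hind fun x => ?_
        by_cases hx : x ∈ {x : ℝ | M ≤ |x|}
        · rw [Set.indicator_of_mem hx]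
          exact bumpBCF_le_one _ _
        · rw [Set.indicator_of_notMem hx]
          have : |x| ≤ M := le_of_not_ge hx
          rw [bumpBCF_eq_zero this]
    _ = (ν {x : ℝ | M ≤ |x|}).toReal := by
        rw [integral_indicator_const _ hset, smul_eq_mul, mul_one]
        rfl

/-- Tightness from convergence in distribution. -/
lemma tight_of_convInDist {W : ℕ → Ω → ℝ} {ν : Measure ℝ} [IsProbabilityMeasure ν]
    (hconv : ConvInDist μ W ν) (hmeas : ∀ n, Measurable (W n)) {ε : ℝ} (hε : 0 < ε) :
    ∃ M : ℝ, 0 < M ∧ ∀ᶠ n in atTop, (μ {ω | M ≤ |W n ω|}).toReal < ε := by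
  -- first find a cutoff for ν
  have hν : Tendsto (fun k : ℕ => (ν {x : ℝ | (k:ℝ) ≤ |x|}).toReal) atTop (nhds 0) := by
    have h1 : Tendsto (fun k : ℕ => ν {x : ℝ | (k:ℝ) ≤ |x|}) atTop
        (nhds (ν (⋂ k : ℕ, {x : ℝ | (k:ℝ) ≤ |x|}))) := by
      refine tendsto_measure_iInter_atTop
        (fun k => (measurableSet_le measurable_const measurable_abs).nullMeasurableSet)
        (fun i j hij x hx => le_trans ((Nat.cast_le (α := ℝ)).mpr hij) hx)
        ⟨0, measure_ne_top ν _⟩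
    have hempty : (⋂ k : ℕ, {x : ℝ | (k:ℝ) ≤ |x|}) = ∅ := by
      ext x
      simp only [Set.mem_iInter, Set.mem_setOf_eq, Set.mem_empty_iff_false, iff_false, not_forall,
        not_le]
      obtain ⟨k, hk⟩ := exists_nat_gt |x|
      exact ⟨k, hk⟩
    rw [hempty, measure_empty] at h1
    have := (ENNReal.tendsto_toReal (ENNReal.zero_ne_top)).comp h1
    exact this
  obtain ⟨k, hk⟩ := (hν.eventually_lt_const (show (0:ℝ) < ε/2 by linarith)).exists
  -- use the bump at level k
  have hlim : ∫ x, bumpBCF (k:ℝ) x ∂ν < ε/2 := lt_of_le_of_lt (integral_bump_le _) hk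
  have hev : ∀ᶠ n in atTop, ∫ ω, bumpBCF (k:ℝ) (W n ω) ∂μ < ε :=
    (hconv (bumpBCF (k:ℝ))).eventually_lt_const (by linarith)
  refine ⟨(k:ℝ) + 1, by positivity, ?_⟩
  filter_upwards [hev] with n hn
  exact lt_of_le_of_lt (toReal_meas_le_integral_bump (hmeas n) (k:ℝ)) hn

/-- Slutsky: convergence in distribution is preserved by perturbations tending to zero in
probability. -/
lemma slutsky_convInDist {W Z : ℕ → Ω → ℝ} {ν : Measure ℝ} [IsProbabilityMeasure ν]
    (hmeasW : ∀ n, Measurable (W n)) (hmeasZ : ∀ n, Measurable (Z n))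
    (hW : ConvInDist μ W ν)
    (hD : ∀ δ > (0:ℝ), ∀ ε > (0:ℝ),
      ∀ᶠ n in atTop, (μ {ω | δ ≤ |Z n ω - W n ω|}).toReal < ε) :
    ConvInDist μ Z ν := by
  intro f
  rw [Metric.tendsto_atTop]
  intro ε hε
  set B : ℝ := ‖f‖ + 1 with hB
  have hBpos : 0 < B := by positivity
  have hfB : ∀ x, |f x| ≤ B := fun x => by
    have := f.norm_coe_le_norm x
    rw [Real.norm_eq_abs] at this
    linarith
  obtain ⟨M, hMpos, hMtail⟩ :=
    tight_of_convInDist hW hmeasW (show (0:ℝ) < ε/(8*B) by positivity)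
  -- uniform continuity of f on a compact interval
  have hK : IsCompact (Set.Icc (-(M+1)) (M+1)) := isCompact_Icc
  have huc := hK.uniformContinuousOn_of_continuous f.continuous.continuousOn
  rw [Metric.uniformContinuousOn_iff] at huc
  obtain ⟨δ0, hδ0, hδimp⟩ := huc (ε/4) (by positivity)
  set δ : ℝ := min δ0 1 with hδdef
  have hδpos : 0 < δ := lt_min hδ0 one_pos
  have hDtail := hD δ hδpos (ε/(8*B)) (by positivity)
  have hWf : ∀ᶠ n in atTop, dist (∫ ω, f (W n ω) ∂μ) (∫ x, f x ∂ν) < ε/4 :=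
    (hW f).eventually (Metric.ball_mem_nhds _ (by positivity))
  have hfin : ∀ᶠ n in atTop, dist (∫ ω, f (Z n ω) ∂μ) (∫ x, f x ∂ν) < ε := by
    filter_upwards [hMtail, hDtail, hWf] with n h1 h2 h3
    set s1 : Set Ω := {ω | M ≤ |W n ω|} with hs1
    set s2 : Set Ω := {ω | δ ≤ |Z n ω - W n ω|} with hs2
    have hs1m : MeasurableSet s1 := measurableSet_le measurable_const (hmeasW n).abs
    have hs2m : MeasurableSet s2 :=
      measurableSet_le measurable_const ((hmeasZ n).sub (hmeasW n)).abs
    set bad : Set Ω := s1 ∪ s2 with hbad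
    have hbadm : MeasurableSet bad := hs1m.union hs2m
    have hpt : ∀ ω, |f (Z n ω) - f (W n ω)| ≤ ε/4 + Set.indicator bad (fun _ => 2*B) ω := by
      intro ω
      by_cases hω : ω ∈ bad
      · rw [Set.indicator_of_mem hω]
        have hz := hfB (Z n ω)
        have hw := hfB (W n ω)
        have habs : |f (Z n ω) - f (W n ω)| ≤ |f (Z n ω)| + |f (W n ω)| := abs_sub _ _
        have : (0:ℝ) ≤ ε/4 := by positivity
        linarith
      · rw [Set.indicator_of_notMem hω]
        have hω1 : ω ∉ s1 := fun h => hω (Or.inl h)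
        have hω2 : ω ∉ s2 := fun h => hω (Or.inr h)
        have hWlt : |W n ω| < M := lt_of_not_ge hω1
        have hZW : |Z n ω - W n ω| < δ := lt_of_not_ge hω2
        have hWmem : W n ω ∈ Set.Icc (-(M+1)) (M+1) := by
          rw [Set.mem_Icc]
          have := abs_le.mp (le_of_lt hWlt)
          constructor <;> linarith [this.1, this.2]
        have hZmem : Z n ω ∈ Set.Icc (-(M+1)) (M+1) := by
          rw [Set.mem_Icc]
          have hz : |Z n ω| ≤ |W n ω| + |Z n ω - W n ω| := by
            have := abs_add_le (W n ω) (Z n ω - W n ω)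
            simpa using this
          have hδ1 : δ ≤ 1 := min_le_right _ _
          have hZle : |Z n ω| ≤ M + 1 := by linarith
          have := abs_le.mp hZle
          exact ⟨this.1, this.2⟩
        have hdist : dist (Z n ω) (W n ω) < δ0 := by
          rw [Real.dist_eq]
          exact lt_of_lt_of_le hZW (min_le_left _ _)
        have := hδimp (Z n ω) hZmem (W n ω) hWmem hdist
        rw [Real.dist_eq] at this
        have : |f (Z n ω) - f (W n ω)| ≤ ε/4 := le_of_lt this
        linarith
    have hfZint : Integrable (fun ω => f (Z n ω)) μ := by
      refine Integrable.mono' (integrable_const B)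
        ((f.continuous.measurable.comp (hmeasZ n)).aestronglyMeasurable)
        (ae_of_all _ fun ω => ?_)
      rw [Real.norm_eq_abs]; exact hfB _
    have hfWint : Integrable (fun ω => f (W n ω)) μ := by
      refine Integrable.mono' (integrable_const B)
        ((f.continuous.measurable.comp (hmeasW n)).aestronglyMeasurable)
        (ae_of_all _ fun ω => ?_)
      rw [Real.norm_eq_abs]; exact hfB _
    have hIndInt : Integrable (fun ω => ε/4 + Set.indicator bad (fun _ => 2*B) ω) μ :=
      (integrable_const _).add ((integrable_const _).indicator hbadm)
    have hkey : |(∫ ω, f (Z n ω) ∂μ) - ∫ ω, f (W n ω) ∂μ| ≤ ε/4 + 2*B*((μ bad).toReal) := by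
      rw [← integral_sub hfZint hfWint]
      calc |∫ ω, (f (Z n ω) - f (W n ω)) ∂μ|
          ≤ ∫ ω, |f (Z n ω) - f (W n ω)| ∂μ := by
            simpa [Real.norm_eq_abs] using
              norm_integral_le_integral_norm (μ := μ) (fun ω => f (Z n ω) - f (W n ω))
        _ ≤ ∫ ω, (ε/4 + Set.indicator bad (fun _ => 2*B) ω) ∂μ :=
            integral_mono (hfZint.sub hfWint).abs hIndInt hpt
        _ = ε/4 + 2*B*((μ bad).toReal) := by
            rw [integral_add (integrable_const _) ((integrable_const _).indicator hbadm),
              integral_const, integral_indicator_const _ hbadm]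
            simp [mul_comm]
            exact Or.inl rfl
    have hbadmeas : (μ bad).toReal ≤ ε/(8*B) + ε/(8*B) := by
      have h1' : (μ bad).toReal ≤ (μ s1).toReal + (μ s2).toReal := by
        have hle : μ bad ≤ μ s1 + μ s2 := measure_union_le _ _
        have := ENNReal.toReal_mono
          (by simp [ENNReal.add_ne_top, measure_ne_top]) hle
        rwa [ENNReal.toReal_add (measure_ne_top μ _) (measure_ne_top μ _)] at this
      linarith
    have h2B : 2*B*((μ bad).toReal) ≤ ε/2 := by
      have : 2*B*((μ bad).toReal) ≤ 2*B*(ε/(8*B) + ε/(8*B)) :=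
        mul_le_mul_of_nonneg_left hbadmeas (by positivity)
      have heq : 2*B*(ε/(8*B) + ε/(8*B)) = ε/2 := by
        field_simp
        ring
      linarith
    calc dist (∫ ω, f (Z n ω) ∂μ) (∫ x, f x ∂ν)
        ≤ dist (∫ ω, f (Z n ω) ∂μ) (∫ ω, f (W n ω) ∂μ)
          + dist (∫ ω, f (W n ω) ∂μ) (∫ x, f x ∂ν) := dist_triangle _ _ _
      _ < (ε/4 + ε/2) + ε/4 := by
          refine add_lt_add_of_le_of_lt ?_ h3
          rw [Real.dist_eq]
          linarith
      _ = ε := by ring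
  exact eventually_atTop.mp hfin

end Aux

set_option maxHeartbeats 2000000 in
/-- Delta-method/Slutsky with asymmetric rates: if `aₙ(Xₙ - x₀) ⇒ N(0, σ_X²)`,
`bₙ(Yₙ - y₀) ⇒ N(0, σ_Y²)`, `Xₙ ⫫ Yₙ`, `x₀, y₀ > 0`, `aₙ, bₙ → ∞` and `bₙ/aₙ → 0`,
then `bₙ(Xₙ/Yₙ - x₀/y₀) ⇒ N(0, (x₀²/y₀²)(σ_Y²/y₀²))`. -/
theorem ratio_clt_slower_rate {Ω : Type*} [MeasurableSpace Ω] (μ : Measure Ω)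
    [IsProbabilityMeasure μ] (X Y : ℕ → Ω → ℝ) (a b : ℕ → ℝ) (x0 y0 : ℝ)
    (vX vY : NNReal)
    (hmeasX : ∀ n, Measurable (X n)) (hmeasY : ∀ n, Measurable (Y n))
    (hx0 : 0 < x0) (hy0 : 0 < y0)
    (ha : Tendsto a atTop atTop) (hb : Tendsto b atTop atTop)
    (hba : Tendsto (fun n => b n / a n) atTop (nhds 0))
    (hindep : ∀ n, IndepFun (X n) (Y n) μ)
    (hXconv : ConvInDist μ (fun n ω => a n * (X n ω - x0)) (gaussianReal 0 vX))
    (hYconv : ConvInDist μ (fun n ω => b n * (Y n ω - y0)) (gaussianReal 0 vY)) :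
    ConvInDist μ (fun n ω => b n * (X n ω / Y n ω - x0 / y0))
      (gaussianReal 0 ((Real.toNNReal (x0 ^ 2 / y0 ^ 4)) * vY)) := by
  set c : ℝ := -(x0 / y0^2) with hc
  set V : ℕ → Ω → ℝ := fun n ω => b n * (Y n ω - y0) with hV
  set A : ℕ → Ω → ℝ := fun n ω => a n * (X n ω - x0) with hA
  set W : ℕ → Ω → ℝ := fun n ω => c * V n ω with hW
  set Z : ℕ → Ω → ℝ := fun n ω => b n * (X n ω / Y n ω - x0 / y0) with hZ
  have hmeasV : ∀ n, Measurable (V n) := fun n =>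
    measurable_const.mul ((hmeasY n).sub measurable_const)
  have hmeasA : ∀ n, Measurable (A n) := fun n =>
    measurable_const.mul ((hmeasX n).sub measurable_const)
  have hmeasW : ∀ n, Measurable (W n) := fun n => measurable_const.mul (hmeasV n)
  have hmeasZ : ∀ n, Measurable (Z n) := fun n =>
    measurable_const.mul (((hmeasX n).div (hmeasY n)).sub measurable_const)
  -- the limit of W
  have hmap : (gaussianReal 0 vY).map (fun x => c * x)
      = gaussianReal 0 ((Real.toNNReal (x0 ^ 2 / y0 ^ 4)) * vY) := by
    have := gaussianReal_map_const_mul (μ := 0) (v := vY) c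
    rw [show ((c * ·) : ℝ → ℝ) = fun x => c * x from rfl] at this
    rw [this]
    congr 1
    · simp
    · congr 1
      apply NNReal.coe_injective
      have hcsq : c^2 = x0^2 / y0^4 := by
        rw [hc]
        field_simp
      simp only [NNReal.coe_mk]
      rw [Real.coe_toNNReal _ (by positivity)]
      exact hcsq
  have hWconv : ConvInDist μ W (gaussianReal 0 ((Real.toNNReal (x0 ^ 2 / y0 ^ 4)) * vY)) := by
    intro f
    have hcont : Continuous fun x : ℝ => c * x := continuous_const.mul continuous_id
    have hmain := hYconv (f.compContinuous ⟨fun x => c * x, hcont⟩)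
    have happ : ∀ x : ℝ, (f.compContinuous ⟨fun x => c * x, hcont⟩) x = f (c * x) :=
      fun x => rfl
    simp only [happ] at hmain
    have hrhs : ∫ x, f (c * x) ∂(gaussianReal 0 vY)
        = ∫ x, f x ∂(gaussianReal 0 ((Real.toNNReal (x0 ^ 2 / y0 ^ 4)) * vY)) := by
      rw [← hmap, integral_map hcont.measurable.aemeasurable f.continuous.aestronglyMeasurable]
    rw [hrhs] at hmain
    exact hmain
  -- the difference tends to zero in probability
  have hD : ∀ δ > (0:ℝ), ∀ ε > (0:ℝ),
      ∀ᶠ n in atTop, (μ {ω | δ ≤ |Z n ω - W n ω|}).toReal < ε := by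
    intro δ hδ ε hε
    obtain ⟨M1, hM1pos, hVt⟩ := tight_of_convInDist hYconv hmeasV (show (0:ℝ) < ε/2 by linarith)
    obtain ⟨M2, hM2pos, hAt⟩ := tight_of_convInDist hXconv hmeasA (show (0:ℝ) < ε/2 by linarith)
    set K : ℝ := 2/y0 + 2*x0*M1/y0^3 + 1 with hK
    have hKpos : 0 < K := by rw [hK]; positivity
    have hK1 : 1 ≤ K := by
      have h0 : 0 ≤ 2/y0 + 2*x0*M1/y0^3 := by positivity
      rw [hK]; linarith
    set η : ℝ := min (y0/2) (δ/K) with hη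
    have hηpos : 0 < η := lt_min (by positivity) (div_pos hδ hKpos)
    have hηy0 : η ≤ y0/2 := min_le_left _ _
    have hηδK : η ≤ δ/K := min_le_right _ _
    clear_value K η
    have hbpos : ∀ᶠ n in atTop, 0 < b n := hb.eventually_gt_atTop 0
    have hapos : ∀ᶠ n in atTop, 0 < a n := ha.eventually_gt_atTop 0
    have hbalt : ∀ᶠ n in atTop, b n / a n < η / M2 :=
      hba.eventually_lt_const (div_pos hηpos hM2pos)
    have hbM : ∀ᶠ n in atTop, M1 / η ≤ b n := hb.eventually_ge_atTop _
    filter_upwards [hVt, hAt, hbpos, hapos, hbalt, hbM] with n h1 h2 h3 h4 h5 h6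
    set s1 : Set Ω := {ω | M1 ≤ |V n ω|} with hs1
    set s2 : Set Ω := {ω | M2 ≤ |A n ω|} with hs2
    have hsub : {ω | δ ≤ |Z n ω - W n ω|} ⊆ s1 ∪ s2 := by
      intro ω hω
      by_contra hcon
      rw [Set.mem_union] at hcon
      push_neg at hcon
      have hVlt : |V n ω| < M1 := lt_of_not_ge hcon.1
      have hAlt : |A n ω| < M2 := lt_of_not_ge hcon.2
      -- Y is close to y0
      have hYeq : |Y n ω - y0| = |V n ω| / b n := by
        simp only [hV]
        rw [abs_mul, abs_of_pos h3]
        field_simp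
      have hYη : |Y n ω - y0| ≤ η := by
        rw [hYeq]
        have hb1 : M1 ≤ b n * η := by
          rw [div_le_iff₀ hηpos] at h6
          linarith
        rw [div_le_iff₀ h3]
        calc |V n ω| ≤ M1 := le_of_lt hVlt
          _ ≤ b n * η := hb1
          _ = η * b n := by ring
      have hYlb : y0/2 ≤ Y n ω := by
        have := abs_le.mp hYη
        linarith [this.1]
      have hYpos : 0 < Y n ω := lt_of_lt_of_le (by positivity) hYlb
      -- U := b n * (X n ω - x0) is small
      have hUeq : b n * (X n ω - x0) = (b n / a n) * A n ω := by
        simp only [hA]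
        field_simp [h4.ne']
      have hUη : |b n * (X n ω - x0)| ≤ η := by
        rw [hUeq, abs_mul, abs_of_pos (div_pos h3 h4)]
        have h0 : 0 ≤ b n / a n := le_of_lt (div_pos h3 h4)
        calc (b n / a n) * |A n ω| ≤ (η / M2) * M2 := by
              apply mul_le_mul (le_of_lt h5) (le_of_lt hAlt) (abs_nonneg _)
                (div_pos hηpos hM2pos).le
          _ = η := by field_simp
      -- algebraic identity
      have hid : Z n ω - W n ω
          = (b n * (X n ω - x0)) / Y n ω
            + x0 * V n ω * (Y n ω - y0) / (Y n ω * y0^2) := by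
        simp only [hZ, hW, hV, hc]
        field_simp [hYpos.ne', hy0.ne']
        ring
      have hb1 : |(b n * (X n ω - x0)) / Y n ω| ≤ η / (y0/2) := by
        rw [abs_div, abs_of_pos hYpos]
        exact div_le_div₀ hηpos.le hUη (by positivity) hYlb
      have hb2 : |x0 * V n ω * (Y n ω - y0) / (Y n ω * y0^2)|
          ≤ (x0 * M1 * η) / ((y0/2) * y0^2) := by
        rw [abs_div, abs_mul, abs_mul, abs_of_pos hx0,
          abs_of_pos (mul_pos hYpos (by positivity : (0:ℝ) < y0^2))]
        refine div_le_div₀ (mul_nonneg (mul_nonneg hx0.le hM1pos.le) hηpos.le) ?_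
          (by positivity) ?_
        · refine mul_le_mul ?_ hYη (abs_nonneg _) (by positivity)
          exact mul_le_mul_of_nonneg_left (le_of_lt hVlt) (le_of_lt hx0)
        · exact mul_le_mul_of_nonneg_right hYlb (by positivity)
      have hsum : η / (y0/2) + (x0 * M1 * η) / ((y0/2) * y0^2) = η * (K - 1) := by
        rw [hK]
        field_simp [hy0.ne']
        ring
      have hfin : |Z n ω - W n ω| < δ := by
        have habs : |Z n ω - W n ω| ≤ η / (y0/2) + (x0 * M1 * η) / ((y0/2) * y0^2) := by
          rw [hid]
          exact le_trans (abs_add_le _ _) (add_le_add hb1 hb2)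
        have h1' : η * (K - 1) ≤ (δ/K) * (K - 1) :=
          mul_le_mul_of_nonneg_right hηδK (by linarith)
        have h2' : (δ/K) * (K - 1) < δ := by
          rw [div_mul_eq_mul_div, div_lt_iff₀ hKpos]
          nlinarith
        rw [hsum] at habs
        linarith
      exact absurd hω (not_le.mpr hfin)
    have hs1m : MeasurableSet s1 := measurableSet_le measurable_const (hmeasV n).abs
    have hs2m : MeasurableSet s2 := measurableSet_le measurable_const (hmeasA n).abs
    have hle : μ {ω | δ ≤ |Z n ω - W n ω|} ≤ μ s1 + μ s2 :=
      le_trans (measure_mono hsub) (measure_union_le _ _)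
    have htr : (μ {ω | δ ≤ |Z n ω - W n ω|}).toReal ≤ (μ s1).toReal + (μ s2).toReal := by
      have := ENNReal.toReal_mono
        (by simp [ENNReal.add_ne_top, measure_ne_top]) hle
      rwa [ENNReal.toReal_add (measure_ne_top μ _) (measure_ne_top μ _)] at this
    linarith
  exact slutsky_convInDist hmeasW hmeasZ hWconv hD
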